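/- Let h > 0 and s_L > 1 > s_R > 0, and define F : ℝ → ℝ by F(x) = s_L·x if x < h and F(x) = s_R·x if x ≥ h. Then F restricted to the half-open interval I = [s_R·h, s_L·h) is a bijection of I onto itself. -/

import Mathlib

theorem stmt7 (h sL sR : ℝ) (hh : 0 < h) (hL : 1 < sL) (hR0 : 0 < sR) (hR1 : sR < 1)
    (F : ℝ → ℝ) (hF : ∀ x, F x = if x < h then sL * x else sR * x) :
    Set.BijOn F (Set.Ico (sR * h) (sL * h)) (Set.Ico (sR * h) (sL * h)) := by
  have hL0 : (0:ℝ) < sL := lt_trans one_pos hL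
  have hsrh : sR * h < h := by nlinarith
  have hslh : h < sL * h := by nlinarith
  refine ⟨?_, ?_, ?_⟩
  · intro x hx
    obtain ⟨hx1, hx2⟩ := hx
    rw [hF]
    by_cases hc : x < h
    · simp only [hc, if_true]
      constructor
      · nlinarith
      · nlinarith
    · simp only [hc, if_false]
      push_neg at hc
      constructor
      · nlinarith
      · nlinarith
  · intro x hx y hy hxy
    obtain ⟨hx1, hx2⟩ := hx
    obtain ⟨hy1, hy2⟩ := hy
    rw [hF, hF] at hxy
    by_cases hcx : x < h <;> by_cases hcy : y < h <;>
      simp only [hcx, hcy, if_true, if_false] at hxy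
    · exact mul_left_cancel₀ (ne_of_gt hL0) hxy
    · nlinarith
    · nlinarith
    · exact mul_left_cancel₀ (ne_of_gt hR0) hxy
  · intro y hy
    obtain ⟨hy1, hy2⟩ := hy
    by_cases hc : y < sR * (sL * h)
    · refine ⟨y / sR, ⟨?_, ?_⟩, ?_⟩
      · rw [le_div_iff₀ hR0]; nlinarith
      · rw [div_lt_iff₀ hR0]; nlinarith
      · have hge : ¬ (y / sR < h) := by
          rw [not_lt, le_div_iff₀ hR0]; nlinarith
        rw [hF, if_neg hge, mul_div_cancel₀ _ (ne_of_gt hR0)]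
    · push_neg at hc
      refine ⟨y / sL, ⟨?_, ?_⟩, ?_⟩
      · rw [le_div_iff₀ hL0]; nlinarith
      · rw [div_lt_iff₀ hL0]; nlinarith
      · have hlt : y / sL < h := by rw [div_lt_iff₀ hL0]; nlinarith
        rw [hF, if_pos hlt, mul_div_cancel₀ _ (ne_of_gt hL0)]
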